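/- Let k be an algebraically closed field, A a finite-dimensional k-algebra, and t a Calabi–Yau family of traces on the finitely generated projective right A-modules; for a finitely generated projective R and y ∈ End_A(R) let τ_R(y)_P := Σ_i g^i ∘ y ∘ g_i ∈ End_A(P), computed from any dual bases (g_i) of Hom_A(P,R) and (g^i) of Hom_A(R,P). Let G be a finitely generated projective right A-module such that every finitely generated projective right A-module is a direct summand of G^{⊕m} for some m ≥ 1 (for example G = A). Then for every finitely generated projective right A-module R and every y ∈ End_A(R) there exists h ∈ End_A(G) such that τ_R(y)_P = τ_G(h)_P for every finitely generated projective right A-module P. (That is, the Higman ideal equals the image of τ_G.) -/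

import Mathlib

universe u

/-- A bundled finitely generated projective right `A`-module (with compatible `k`-action). -/
structure FGProj (k A : Type u) [Field k] [Ring A] [Algebra k A] : Type (u + 1) where
  carrier : Type u
  [isAddCommGroup : AddCommGroup carrier]
  [isModuleK : Module k carrier]
  [isModuleA : Module Aᵐᵒᵖ carrier]
  [isTower : IsScalarTower k Aᵐᵒᵖ carrier]
  [isFinite : Module.Finite Aᵐᵒᵖ carrier]
  [isProjective : Module.Projective Aᵐᵒᵖ carrier]

attribute [instance] FGProj.isAddCommGroup FGProj.isModuleK FGProj.isModuleA
  FGProj.isTower FGProj.isFinite FGProj.isProjective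

instance (k A : Type u) [Field k] [Ring A] [Algebra k A] : CoeSort (FGProj k A) (Type u) :=
  ⟨FGProj.carrier⟩

/-- A Calabi–Yau family of traces on the finitely generated projective right `A`-modules. -/
structure CYTraces (k A : Type u) [Field k] [Ring A] [Algebra k A] : Type (u + 1) where
  t : ∀ P : FGProj k A, ((P : Type u) →ₗ[Aᵐᵒᵖ] P) →ₗ[k] k
  cyclic : ∀ (P Q : FGProj k A) (f : (P : Type u) →ₗ[Aᵐᵒᵖ] Q) (g : (Q : Type u) →ₗ[Aᵐᵒᵖ] P),
    t P (g ∘ₗ f) = t Q (f ∘ₗ g)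
  nondeg_left : ∀ (P Q : FGProj k A) (f : (P : Type u) →ₗ[Aᵐᵒᵖ] Q), f ≠ 0 →
    ∃ g : (Q : Type u) →ₗ[Aᵐᵒᵖ] P, t Q (f ∘ₗ g) ≠ 0
  nondeg_right : ∀ (P Q : FGProj k A) (g : (Q : Type u) →ₗ[Aᵐᵒᵖ] P), g ≠ 0 →
    ∃ f : (P : Type u) →ₗ[Aᵐᵒᵖ] Q, t Q (f ∘ₗ g) ≠ 0

open scoped Classical

section Aux

variable {k A : Type u} [Field k] [Ring A] [Algebra k A]

theorem mySumComp {M N O : Type u} [AddCommGroup M] [AddCommGroup N] [AddCommGroup O]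
    [Module Aᵐᵒᵖ M] [Module Aᵐᵒᵖ N] [Module Aᵐᵒᵖ O] {ι : Type u} (s : Finset ι)
    (f : ι → (N →ₗ[Aᵐᵒᵖ] O)) (g : M →ₗ[Aᵐᵒᵖ] N) :
    (∑ i ∈ s, f i) ∘ₗ g = ∑ i ∈ s, f i ∘ₗ g := by
  ext x; simp [LinearMap.coe_sum, Finset.sum_apply]

theorem myCompSum {M N O : Type u} [AddCommGroup M] [AddCommGroup N] [AddCommGroup O]
    [Module Aᵐᵒᵖ M] [Module Aᵐᵒᵖ N] [Module Aᵐᵒᵖ O] {ι : Type u} (s : Finset ι)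
    (f : ι → (M →ₗ[Aᵐᵒᵖ] N)) (g : N →ₗ[Aᵐᵒᵖ] O) :
    g ∘ₗ (∑ i ∈ s, f i) = ∑ i ∈ s, g ∘ₗ f i := by
  ext x; simp [LinearMap.coe_sum, Finset.sum_apply]

theorem myCompSmul (P Q S : FGProj k A) (c : k) (f : (P : Type u) →ₗ[Aᵐᵒᵖ] Q)
    (g : (Q : Type u) →ₗ[Aᵐᵒᵖ] S) :
    g ∘ₗ (c • f) = c • (g ∘ₗ f) := by
  ext x; simp [LinearMap.map_smul_of_tower]

/-- expansion on the left-hom side: `f = ∑ i, t(f ∘ b' i) • b i`. -/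
theorem expandL (t : CYTraces k A) (P Q : FGProj k A) {ι : Type u} [Fintype ι]
    (b : Module.Basis ι k ((P : Type u) →ₗ[Aᵐᵒᵖ] Q)) (b' : ι → ((Q : Type u) →ₗ[Aᵐᵒᵖ] P))
    (hd : ∀ i j, t.t Q (b j ∘ₗ b' i) = if i = j then 1 else 0)
    (f : (P : Type u) →ₗ[Aᵐᵒᵖ] Q) :
    f = ∑ i, t.t Q (f ∘ₗ b' i) • b i := by
  have hrep : ∀ i, t.t Q (f ∘ₗ b' i) = b.repr f i := by
    intro i
    conv_lhs => rw [← b.sum_repr f]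
    rw [mySumComp, map_sum]
    simp only [LinearMap.smul_comp, map_smul, hd, smul_eq_mul, mul_ite, mul_one, mul_zero]
    simp
  simp only [hrep]
  exact (b.sum_repr f).symm

/-- expansion on the right-hom side: `g = ∑ i, t(b i ∘ g) • b' i`. -/
theorem expandR (t : CYTraces k A) (P Q : FGProj k A) {ι : Type u} [Fintype ι]
    (b : ι → ((P : Type u) →ₗ[Aᵐᵒᵖ] Q)) (b' : Module.Basis ι k ((Q : Type u) →ₗ[Aᵐᵒᵖ] P))
    (hd : ∀ i j, t.t Q (b j ∘ₗ b' i) = if i = j then 1 else 0)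
    (g : (Q : Type u) →ₗ[Aᵐᵒᵖ] P) :
    g = ∑ i, t.t Q (b i ∘ₗ g) • b' i := by
  have hrep : ∀ i, t.t Q (b i ∘ₗ g) = b'.repr g i := by
    intro i
    conv_lhs => rw [← b'.sum_repr g]
    rw [myCompSum, map_sum]
    simp only [myCompSmul, map_smul, hd, smul_eq_mul, mul_ite, mul_one, mul_zero]
    simp
  simp only [hrep]
  exact (b'.sum_repr g).symm

end Aux

theorem higman_eq_image_tauG
    (k A : Type u) [Field k] [IsAlgClosed k] [Ring A] [Algebra k A] [FiniteDimensional k A]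
    (t : CYTraces k A) (G : FGProj k A)
    (hG : ∀ P : FGProj k A, ∃ m : ℕ, 1 ≤ m ∧
      ∃ (i : (P : Type u) →ₗ[Aᵐᵒᵖ] (Fin m → G)) (p : (Fin m → (G : Type u)) →ₗ[Aᵐᵒᵖ] P),
        p ∘ₗ i = LinearMap.id)
    (R : FGProj k A) (y : (R : Type u) →ₗ[Aᵐᵒᵖ] R) :
    ∃ h : (G : Type u) →ₗ[Aᵐᵒᵖ] G,
      ∀ (P : FGProj k A) (ι κ : Type u) [Fintype ι] [Fintype κ]
        (g : Module.Basis ι k ((P : Type u) →ₗ[Aᵐᵒᵖ] R)) (g' : Module.Basis ι k ((R : Type u) →ₗ[Aᵐᵒᵖ] P)),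
        (∀ i j, t.t R (g j ∘ₗ g' i) = if i = j then 1 else 0) →
        ∀ (u : Module.Basis κ k ((P : Type u) →ₗ[Aᵐᵒᵖ] G)) (u' : Module.Basis κ k ((G : Type u) →ₗ[Aᵐᵒᵖ] P)),
        (∀ i j, t.t G (u j ∘ₗ u' i) = if i = j then 1 else 0) →
        ∑ i, g' i ∘ₗ y ∘ₗ g i = ∑ j, u' j ∘ₗ h ∘ₗ u j := by
  obtain ⟨n, -, iR, pR, hpi⟩ := hG R
  set π : Fin n → ((Fin n → (G : Type u)) →ₗ[Aᵐᵒᵖ] G) := fun s => LinearMap.proj s with hπ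
  set σ : Fin n → ((G : Type u) →ₗ[Aᵐᵒᵖ] (Fin n → (G : Type u))) :=
    fun s => LinearMap.single Aᵐᵒᵖ (fun _ : Fin n => (G : Type u)) s with hσ
  have hσπ : ∑ s : Fin n, σ s ∘ₗ π s = LinearMap.id := by
    ext x j
    simp [hσ, hπ, Finset.sum_apply]
  refine ⟨∑ s : Fin n, π s ∘ₗ ((iR ∘ₗ (y ∘ₗ pR)) ∘ₗ σ s), ?_⟩
  intro P ι κ _ _ g g' hg u u' hu
  symm
  -- useful scalar abbreviations
  have key : ∀ (j : κ) (s : Fin n),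
      (u' j ∘ₗ (π s ∘ₗ iR)) ∘ₗ (y ∘ₗ (pR ∘ₗ (σ s ∘ₗ u j)))
        = ∑ i', ∑ i,
            (t.t R (g i' ∘ₗ (u' j ∘ₗ (π s ∘ₗ iR))) *
              t.t R ((pR ∘ₗ (σ s ∘ₗ u j)) ∘ₗ g' i)) • (g' i' ∘ₗ (y ∘ₗ g i)) := by
    intro j s
    conv_lhs =>
      rw [expandR t P R g g' hg (u' j ∘ₗ (π s ∘ₗ iR)),
        expandL t P R g g' hg (pR ∘ₗ (σ s ∘ₗ u j))]
    rw [mySumComp]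
    refine Finset.sum_congr rfl fun i' _ => ?_
    rw [myCompSum, LinearMap.smul_comp, myCompSum, Finset.smul_sum]
    refine Finset.sum_congr rfl fun i _ => ?_
    rw [myCompSmul, myCompSmul, smul_smul]
  have scalar : ∀ (i' i : ι),
      (∑ j : κ, ∑ s : Fin n,
        t.t R (g i' ∘ₗ (u' j ∘ₗ (π s ∘ₗ iR))) *
          t.t R ((pR ∘ₗ (σ s ∘ₗ u j)) ∘ₗ g' i)) = if i = i' then 1 else 0 := by
    intro i' i
    have step1 : ∀ (j : κ) (s : Fin n),
        t.t R ((pR ∘ₗ (σ s ∘ₗ u j)) ∘ₗ g' i)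
          = t.t G (u j ∘ₗ ((g' i ∘ₗ pR) ∘ₗ σ s)) :=
      fun j s => t.cyclic R G (u j ∘ₗ g' i) (pR ∘ₗ σ s)
    have step2 : ∀ s : Fin n,
        (∑ j : κ, t.t R (g i' ∘ₗ (u' j ∘ₗ (π s ∘ₗ iR))) *
            t.t G (u j ∘ₗ ((g' i ∘ₗ pR) ∘ₗ σ s)))
          = t.t R (g i' ∘ₗ (((g' i ∘ₗ pR) ∘ₗ σ s) ∘ₗ (π s ∘ₗ iR))) := by
      intro s
      have hexp : ((g' i ∘ₗ pR) ∘ₗ σ s) ∘ₗ (π s ∘ₗ iR)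
          = ∑ j : κ, t.t G (u j ∘ₗ ((g' i ∘ₗ pR) ∘ₗ σ s)) • (u' j ∘ₗ (π s ∘ₗ iR)) := by
        conv_lhs => rw [expandR t P G u u' hu ((g' i ∘ₗ pR) ∘ₗ σ s)]
        rw [mySumComp]
        exact Finset.sum_congr rfl fun j _ => LinearMap.smul_comp _ _ _
      rw [hexp, myCompSum, map_sum]
      refine Finset.sum_congr rfl fun j _ => ?_
      rw [myCompSmul, map_smul, smul_eq_mul, mul_comm]
    calc (∑ j : κ, ∑ s : Fin n,
            t.t R (g i' ∘ₗ (u' j ∘ₗ (π s ∘ₗ iR))) *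
              t.t R ((pR ∘ₗ (σ s ∘ₗ u j)) ∘ₗ g' i))
        = ∑ s : Fin n, ∑ j : κ,
            t.t R (g i' ∘ₗ (u' j ∘ₗ (π s ∘ₗ iR))) *
              t.t G (u j ∘ₗ ((g' i ∘ₗ pR) ∘ₗ σ s)) := by
          rw [Finset.sum_comm]
          exact Finset.sum_congr rfl fun s _ => Finset.sum_congr rfl fun j _ => by
            rw [step1]
      _ = ∑ s : Fin n, t.t R (g i' ∘ₗ (((g' i ∘ₗ pR) ∘ₗ σ s) ∘ₗ (π s ∘ₗ iR))) :=
          Finset.sum_congr rfl fun s _ => step2 s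
      _ = t.t R (g i' ∘ₗ ((g' i ∘ₗ pR) ∘ₗ ((∑ s : Fin n, σ s ∘ₗ π s) ∘ₗ iR))) := by
          rw [← map_sum]
          congr 1
          ext x
          simp [LinearMap.coe_sum, Finset.sum_apply]
      _ = t.t R (g i' ∘ₗ g' i) := by
          rw [hσπ]
          congr 1
          ext x
          have hx : pR (iR x) = x := by
            have := LinearMap.ext_iff.mp hpi x
            simpa using this
          simp [hx]
      _ = if i = i' then 1 else 0 := hg i i'
  calc (∑ j, u' j ∘ₗ (∑ s : Fin n, π s ∘ₗ ((iR ∘ₗ (y ∘ₗ pR)) ∘ₗ σ s)) ∘ₗ u j)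
      = ∑ j, ∑ s : Fin n,
          (u' j ∘ₗ (π s ∘ₗ iR)) ∘ₗ (y ∘ₗ (pR ∘ₗ (σ s ∘ₗ u j))) := by
        refine Finset.sum_congr rfl fun j _ => ?_
        ext x
        simp [LinearMap.coe_sum, Finset.sum_apply]
    _ = ∑ j, ∑ s : Fin n, ∑ i', ∑ i,
          (t.t R (g i' ∘ₗ (u' j ∘ₗ (π s ∘ₗ iR))) *
            t.t R ((pR ∘ₗ (σ s ∘ₗ u j)) ∘ₗ g' i)) • (g' i' ∘ₗ (y ∘ₗ g i)) := by
        exact Finset.sum_congr rfl fun j _ => Finset.sum_congr rfl fun s _ => key j s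
    _ = ∑ i', ∑ i,
          (∑ j : κ, ∑ s : Fin n,
            t.t R (g i' ∘ₗ (u' j ∘ₗ (π s ∘ₗ iR))) *
              t.t R ((pR ∘ₗ (σ s ∘ₗ u j)) ∘ₗ g' i)) • (g' i' ∘ₗ (y ∘ₗ g i)) := by
        have swap : ∀ (F : κ → Fin n → ι → ι → ((P : Type u) →ₗ[Aᵐᵒᵖ] P)),
            (∑ j, ∑ s, ∑ i', ∑ i, F j s i' i) = ∑ i', ∑ i, ∑ j, ∑ s, F j s i' i := by
          intro F
          calc (∑ j, ∑ s, ∑ i', ∑ i, F j s i' i)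
              = ∑ j, ∑ i', ∑ s, ∑ i, F j s i' i :=
                Finset.sum_congr rfl fun j _ => Finset.sum_comm
            _ = ∑ i', ∑ j, ∑ s, ∑ i, F j s i' i := Finset.sum_comm
            _ = ∑ i', ∑ j, ∑ i, ∑ s, F j s i' i :=
                Finset.sum_congr rfl fun i' _ =>
                  Finset.sum_congr rfl fun j _ => Finset.sum_comm
            _ = ∑ i', ∑ i, ∑ j, ∑ s, F j s i' i :=
                Finset.sum_congr rfl fun i' _ => Finset.sum_comm
        rw [swap]
        refine Finset.sum_congr rfl fun i' _ => Finset.sum_congr rfl fun i _ => ?_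
        rw [Finset.sum_smul]
        exact Finset.sum_congr rfl fun j _ => (Finset.sum_smul).symm
    _ = ∑ i', ∑ i, (if i = i' then 1 else 0) • (g' i' ∘ₗ (y ∘ₗ g i)) := by
        refine Finset.sum_congr rfl fun i' _ => Finset.sum_congr rfl fun i _ => ?_
        rw [scalar i' i]
        by_cases hii : i = i' <;> simp [hii]
    _ = ∑ i, g' i ∘ₗ y ∘ₗ g i := by
        simp
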